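/- arXiv:2002.02950 — 3 statements merged into one kernel-verified Lean document; each statement's English description precedes it below -/
import Mathlib

section
/- Let p₀ be a probability measure on ℝ^d and let A* be the Bayesian mixture algorithm with prior p₀. Let θ* ∈ ℝ^d and η ≥ 0, and let Q be a probability measure on ℝ^d, absolutely continuous with respect to p₀ with finite Kullback–Leibler divergence D(Q‖p₀), whose mean is θ* (∫ θ_i dQ(θ) = θ*_i for each i), whose coordinates are uncorrelated under Q (∫ (θ_i − θ*_i)(θ_j − θ*_j) dQ(θ) = 0 for i ≠ j), and whose coordinate variances satisfy ∫ (θ_i − θ*_i)² dQ(θ) ≤ η² for each i. Then for every horizon T and every sequence S_T with ‖x_t‖_∞ ≤ 1 for all t, Regret(A*,S_T,θ*) ≤ D(Q‖p₀) + dTη²/8. -/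
open MeasureTheory Real Filter

noncomputable section

/-- Dot product on `Fin d → ℝ`. -/
def dotp {d : ℕ} (x θ : Fin d → ℝ) : ℝ := ∑ i, x i * θ i

/-- Logistic model probability of label `y ∈ {−1,1}`: `p(y|x,θ) = 1/(1+exp(−y⟨x,θ⟩))`. -/
def lprob {d : ℕ} (θ x : Fin d → ℝ) (y : ℝ) : ℝ :=
  1 / (1 + Real.exp (-(y * dotp x θ)))

/-- Logistic loss `ℓ(θ,x,y) = log(1+exp(−y⟨x,θ⟩))`. -/
def lloss {d : ℕ} (θ x : Fin d → ℝ) (y : ℝ) : ℝ :=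
  Real.log (1 + Real.exp (-(y * dotp x θ)))

/-- Cumulative loss `L(θ,S_T)` of the parameter `θ` on the sequence `S`. -/
def seqLoss {d T : ℕ} (θ : Fin d → ℝ) (S : Fin T → (Fin d → ℝ) × ℝ) : ℝ :=
  ∑ t, lloss θ (S t).1 (S t).2

/-- An online algorithm: maps a history, a current feature vector and a label to a probability. -/
abbrev Alg (d : ℕ) := List ((Fin d → ℝ) × ℝ) → (Fin d → ℝ) → ℝ → ℝ

/-- Validity of an online algorithm: it assigns a probability distribution to the labels `{−1,1}`. -/
def ValidAlg {d : ℕ} (A : Alg d) : Prop :=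
  ∀ h x, 0 ≤ A h x 1 ∧ 0 ≤ A h x (-1) ∧ A h x 1 + A h x (-1) = 1

/-- Validity of a sequence: features have `‖x_t‖_∞ ≤ 1` and labels lie in `{−1,1}`. -/
def ValidSeq {d T : ℕ} (S : Fin T → (Fin d → ℝ) × ℝ) : Prop :=
  ∀ t, (∀ i, |(S t).1 i| ≤ 1) ∧ ((S t).2 = 1 ∨ (S t).2 = -1)

/-- Cumulative loss `L(A,S_T) = −∑_t log A(S_{t−1}, x_t, y_t)` of an online algorithm. -/
def algLoss {d T : ℕ} (A : Alg d) (S : Fin T → (Fin d → ℝ) × ℝ) : ℝ :=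
  -∑ t, Real.log (A ((List.ofFn S).take t.val) (S t).1 (S t).2)

/-- Regret of an online algorithm against a comparator `θ`. -/
def regret {d T : ℕ} (A : Alg d) (S : Fin T → (Fin d → ℝ) × ℝ) (θ : Fin d → ℝ) : ℝ :=
  algLoss A S - seqLoss θ S

/-- `∏_{(x,y) ∈ h} p(y|x,θ)` over a history `h`. -/
def histProb {d : ℕ} (θ : Fin d → ℝ) (h : List ((Fin d → ℝ) × ℝ)) : ℝ :=
  (h.map (fun s => lprob θ s.1 s.2)).prod

/-- Mixture probability `p(y^t|x^t) = ∫ ∏_τ p(y_τ|x_τ,θ) dp₀(θ)`. -/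
def mixProb {d : ℕ} (p₀ : Measure (Fin d → ℝ)) (h : List ((Fin d → ℝ) × ℝ)) : ℝ :=
  ∫ θ, histProb θ h ∂p₀

/-- The Bayesian mixture algorithm with prior `p₀`. -/
def bayesAlg {d : ℕ} (p₀ : Measure (Fin d → ℝ)) : Alg d :=
  fun h x y => mixProb p₀ (h ++ [(x, y)]) / mixProb p₀ h

/-- Discrete mixture probability for a prior given by a probability mass function `p₀`. -/
def mixProbD {d : ℕ} (p₀ : (Fin d → ℝ) → ℝ) (h : List ((Fin d → ℝ) × ℝ)) : ℝ :=
  ∑' θ, p₀ θ * histProb θ h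

/-- The Bayesian mixture algorithm with a discrete prior `p₀`. -/
def bayesAlgD {d : ℕ} (p₀ : (Fin d → ℝ) → ℝ) : Alg d :=
  fun h x y => mixProbD p₀ (h ++ [(x, y)]) / mixProbD p₀ h

/-- Kullback–Leibler divergence `D(Q‖p₀) = ∫ log (dQ/dp₀) dQ`. -/
def KL {d : ℕ} (Q p₀ : Measure (Fin d → ℝ)) : ℝ :=
  ∫ θ, Real.log (Q.rnDeriv p₀ θ).toReal ∂Q

/-- The label in `{−1,1}` encoded by a Boolean. -/
def signv : Bool → ℝ := fun b => if b then 1 else -1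

/-- Binary entropy function (with `h₂(0) = h₂(1) = 0`, since `Real.log 0 = 0`). -/
def binEnt (p : ℝ) : ℝ := -(p * Real.log p) - (1 - p) * Real.log (1 - p)

end

section Basic
variable {d : ℕ}

lemma one_add_exp_pos (z : ℝ) : 0 < 1 + Real.exp z := by positivity

lemma lprob_pos (θ x : Fin d → ℝ) (y : ℝ) : 0 < lprob θ x y := by
  unfold lprob; positivity

lemma lprob_le_one (θ x : Fin d → ℝ) (y : ℝ) : lprob θ x y ≤ 1 := by
  unfold lprob
  rw [div_le_one (one_add_exp_pos _)]
  linarith [Real.exp_pos (-(y * dotp x θ))]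

lemma lloss_nonneg (θ x : Fin d → ℝ) (y : ℝ) : 0 ≤ lloss θ x y :=
  Real.log_nonneg (by linarith [Real.exp_pos (-(y * dotp x θ))])

lemma lprob_eq_exp (θ x : Fin d → ℝ) (y : ℝ) : lprob θ x y = Real.exp (-(lloss θ x y)) := by
  rw [lloss, Real.exp_neg, Real.exp_log (one_add_exp_pos _), lprob, one_div]

lemma histProb_eq_exp (θ : Fin d → ℝ) (h : List ((Fin d → ℝ) × ℝ)) :
    histProb θ h = Real.exp (-(h.map (fun s => lloss θ s.1 s.2)).sum) := by
  induction h with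
  | nil => simp [histProb]
  | cons a t ih =>
      simp only [histProb, List.map_cons, List.prod_cons, List.sum_cons] at *
      rw [ih, lprob_eq_exp, ← Real.exp_add]
      ring_nf

lemma histProb_ofFn_eq {T : ℕ} (θ : Fin d → ℝ) (S : Fin T → (Fin d → ℝ) × ℝ) :
    histProb θ (List.ofFn S) = Real.exp (-(seqLoss θ S)) := by
  rw [histProb_eq_exp, seqLoss]
  congr 1
  rw [List.map_ofFn, List.sum_ofFn]
  rfl

lemma histProb_pos (θ : Fin d → ℝ) (h : List ((Fin d → ℝ) × ℝ)) : 0 < histProb θ h := by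
  rw [histProb_eq_exp]; exact Real.exp_pos _

lemma histProb_le_one (θ : Fin d → ℝ) (h : List ((Fin d → ℝ) × ℝ)) : histProb θ h ≤ 1 := by
  rw [histProb_eq_exp, ← Real.exp_zero]
  apply Real.exp_le_exp.mpr
  simp only [neg_nonpos]
  apply List.sum_nonneg
  intro a ha
  simp only [List.mem_map] at ha
  obtain ⟨s, _, rfl⟩ := ha
  exact lloss_nonneg θ s.1 s.2

lemma continuous_dotp (x : Fin d → ℝ) : Continuous fun θ : Fin d → ℝ => dotp x θ := by
  unfold dotp
  exact continuous_finset_sum _ fun i _ => continuous_const.mul (continuous_apply i)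

lemma continuous_lprob (x : Fin d → ℝ) (y : ℝ) :
    Continuous fun θ : Fin d → ℝ => lprob θ x y := by
  have h2 : Continuous fun θ : Fin d → ℝ => 1 + Real.exp (-(y * dotp x θ)) :=
    continuous_const.add ((continuous_const.mul (continuous_dotp x)).neg.rexp)
  exact continuous_const.div h2 fun θ => (one_add_exp_pos _).ne'

lemma continuous_histProb (h : List ((Fin d → ℝ) × ℝ)) :
    Continuous (fun θ : Fin d → ℝ => histProb θ h) := by
  induction h with
  | nil => simpa [histProb] using continuous_const
  | cons a t ih =>
      simp only [histProb, List.map_cons, List.prod_cons]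
      exact (continuous_lprob a.1 a.2).mul ih

end Basic

section Mix
variable {d : ℕ} (p₀ : Measure (Fin d → ℝ)) [IsProbabilityMeasure p₀]

lemma integrable_histProb (h : List ((Fin d → ℝ) × ℝ)) :
    Integrable (fun θ => histProb θ h) p₀ := by
  apply Integrable.mono' (integrable_const (1 : ℝ))
    (continuous_histProb h).aestronglyMeasurable
  filter_upwards with θ
  rw [Real.norm_eq_abs, abs_of_pos (histProb_pos θ h)]
  exact histProb_le_one θ h

lemma mixProb_pos (h : List ((Fin d → ℝ) × ℝ)) : 0 < mixProb p₀ h := by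
  rw [mixProb, integral_pos_iff_support_of_nonneg
    (fun θ => (histProb_pos θ h).le) (integrable_histProb p₀ h)]
  have : (Function.support fun θ => histProb θ h) = Set.univ := by
    ext θ; simp [(histProb_pos θ h).ne']
  rw [this]
  simp

lemma mixProb_nil : mixProb p₀ ([] : List ((Fin d → ℝ) × ℝ)) = 1 := by
  simp [mixProb, histProb]

lemma algLoss_bayes {T : ℕ} (S : Fin T → (Fin d → ℝ) × ℝ) :
    algLoss (bayesAlg p₀) S = -Real.log (mixProb p₀ (List.ofFn S)) := by
  have hlen : (List.ofFn S).length = T := by simp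
  have hstep : ∀ t : Fin T,
      Real.log (bayesAlg p₀ ((List.ofFn S).take t.val) (S t).1 (S t).2)
        = Real.log (mixProb p₀ ((List.ofFn S).take (t.val + 1)))
          - Real.log (mixProb p₀ ((List.ofFn S).take t.val)) := by
    intro t
    have htake : (List.ofFn S).take (t.val + 1)
        = (List.ofFn S).take t.val ++ [((S t).1, (S t).2)] := by
      rw [List.take_succ]
      congr 1
      have : (List.ofFn S)[t.val]? = some (S t) := by
        rw [List.getElem?_eq_getElem (by simp [hlen, t.isLt])]
        simp
      simp [this]
    rw [bayesAlg, Real.log_div (mixProb_pos p₀ _).ne' (mixProb_pos p₀ _).ne', ← htake]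
  set G : ℕ → ℝ := fun n => Real.log (mixProb p₀ ((List.ofFn S).take n)) with hG
  rw [algLoss]
  congr 1
  calc ∑ t : Fin T, Real.log (bayesAlg p₀ ((List.ofFn S).take t.val) (S t).1 (S t).2)
      = ∑ t : Fin T, (G (t.val + 1) - G t.val) := Finset.sum_congr rfl fun t _ => hstep t
    _ = ∑ n ∈ Finset.range T, (G (n + 1) - G n) :=
        Fin.sum_univ_eq_sum_range (fun n => G (n + 1) - G n) T
    _ = G T - G 0 := Finset.sum_range_sub G T
    _ = Real.log (mixProb p₀ (List.ofFn S)) := by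
        have h1 : G T = Real.log (mixProb p₀ (List.ofFn S)) := by
          simp only [hG]
          rw [List.take_of_length_le (le_of_eq hlen)]
        have h2 : G 0 = 0 := by
          simp only [hG]
          simp only [List.take_zero, mixProb_nil p₀, Real.log_one]
        rw [h1, h2, sub_zero]

end Mix

noncomputable def glog (z : ℝ) : ℝ := Real.log (Real.exp z + 1) - z

lemma exp_add_one_pos (z : ℝ) : 0 < Real.exp z + 1 := by positivity

lemma hasDerivAt_glog (z : ℝ) :
    HasDerivAt glog (Real.exp z / (Real.exp z + 1) - 1) z := by
  have h1 : HasDerivAt (fun z => Real.exp z + 1) (Real.exp z) z :=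
    (Real.hasDerivAt_exp z).add_const 1
  have h2 := h1.log (exp_add_one_pos z).ne'
  exact h2.sub (hasDerivAt_id z)

lemma glog_taylor (b a : ℝ) :
    glog a ≤ glog b + (Real.exp b / (Real.exp b + 1) - 1) * (a - b) + (a - b) ^ 2 / 8 := by
  set Db := Real.exp b / (Real.exp b + 1) - 1 with hDb
  set F : ℝ → ℝ := fun a => glog b + Db * (a - b) + (a - b) ^ 2 / 8 - glog a with hF
  set F1 : ℝ → ℝ := fun a => Db + (a - b) / 4 - (Real.exp a / (Real.exp a + 1) - 1) with hF1
  have hdF : ∀ x, HasDerivAt F (F1 x) x := by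
    intro x
    have h1 : HasDerivAt (fun a : ℝ => glog b + Db * (a - b) + (a - b) ^ 2 / 8)
        (Db + (x - b) / 4) x := by
      have hid : HasDerivAt (fun a : ℝ => a - b) 1 x := (hasDerivAt_id x).sub_const b
      have hsq : HasDerivAt (fun a : ℝ => (a - b) ^ 2 / 8) ((x - b) / 4) x := by
        have := (hid.pow 2).div_const 8
        refine this.congr_deriv ?_
        ring
      have hlin : HasDerivAt (fun a : ℝ => glog b + Db * (a - b)) Db x := by
        simpa using ((hid.const_mul Db).const_add (glog b))
      exact hlin.add hsq
    exact h1.sub (hasDerivAt_glog x)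
  have hdF1 : ∀ x, HasDerivAt F1 (1 / 4 - Real.exp x / (Real.exp x + 1) ^ 2) x := by
    intro x
    have h1 : HasDerivAt (fun a : ℝ => Real.exp a + 1) (Real.exp x) x :=
      (Real.hasDerivAt_exp x).add_const 1
    have hdiv : HasDerivAt (fun a : ℝ => Real.exp a / (Real.exp a + 1))
        ((Real.exp x * (Real.exp x + 1) - Real.exp x * Real.exp x) / (Real.exp x + 1) ^ 2) x :=
      (Real.hasDerivAt_exp x).div h1 (exp_add_one_pos x).ne'
    have hc : HasDerivAt (fun a : ℝ => Db + (a - b) / 4) (1 / 4) x := by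
      simpa using (((hasDerivAt_id x).sub_const b).div_const 4).const_add Db
    have := hc.sub (hdiv.sub_const 1)
    refine this.congr_deriv ?_
    field_simp
    ring
  have hF1nonneg : ∀ x, 0 ≤ 1 / 4 - Real.exp x / (Real.exp x + 1) ^ 2 := by
    intro x
    have h := (exp_add_one_pos x)
    rw [sub_nonneg, div_le_iff₀ (by positivity)]
    nlinarith [sq_nonneg (Real.exp x - 1)]
  have hmonoF1 : Monotone F1 := monotone_of_hasDerivAt_nonneg hdF1 hF1nonneg
  have hF1b : F1 b = 0 := by simp [hF1, hDb]
  have hFb : F b = 0 := by simp [hF]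
  have key : 0 ≤ F a := by
    rcases le_total b a with hba | hab
    · have hmono : MonotoneOn F (Set.Ici b) := by
        apply monotoneOn_of_deriv_nonneg (convex_Ici b)
          (fun x _ => (hdF x).continuousAt.continuousWithinAt)
          (fun x _ => (hdF x).differentiableAt.differentiableWithinAt)
        intro x hx
        rw [(hdF x).deriv]
        rw [interior_Ici] at hx
        have := hmonoF1 (le_of_lt hx)
        linarith [hF1b ▸ this]
      have := hmono (Set.self_mem_Ici) hba hba
      linarith [hFb ▸ this]
    · have hanti : AntitoneOn F (Set.Iic b) := by
        apply antitoneOn_of_deriv_nonpos (convex_Iic b)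
          (fun x _ => (hdF x).continuousAt.continuousWithinAt)
          (fun x _ => (hdF x).differentiableAt.differentiableWithinAt)
        intro x hx
        rw [(hdF x).deriv]
        rw [interior_Iic] at hx
        have := hmonoF1 (le_of_lt hx)
        linarith [hF1b ▸ this]
      have := hanti hab (Set.self_mem_Iic) hab
      linarith [hFb ▸ this]
  simp only [hF] at key
  linarith

section PartC
variable {d : ℕ} (Q : Measure (Fin d → ℝ)) [IsProbabilityMeasure Q]
  (θs : Fin d → ℝ) (η : ℝ)

lemma lloss_eq_glog (θ x : Fin d → ℝ) (y : ℝ) : lloss θ x y = glog (y * dotp x θ) := by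
  set z := y * dotp x θ
  rw [lloss, glog]
  have h1 : 1 + Real.exp (-z) = Real.exp (-z) * (Real.exp z + 1) := by
    rw [mul_add, ← Real.exp_add, mul_one, neg_add_cancel, Real.exp_zero]
  rw [h1, Real.log_mul (Real.exp_pos _).ne' (by positivity), Real.log_exp]
  ring

lemma continuous_lloss (x : Fin d → ℝ) (y : ℝ) :
    Continuous fun θ : Fin d → ℝ => lloss θ x y := by
  have h2 : Continuous fun θ : Fin d → ℝ => 1 + Real.exp (-(y * dotp x θ)) :=
    continuous_const.add ((continuous_const.mul (continuous_dotp x)).neg.rexp)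
  exact h2.log fun θ => by positivity

variable (hmeanint : ∀ i, Integrable (fun θ => θ i) Q)
  (hmomint : ∀ i j, Integrable (fun θ => (θ i - θs i) * (θ j - θs j)) Q)
  (hmean : ∀ i, ∫ θ, θ i ∂Q = θs i)
  (huncorr : ∀ i j, i ≠ j → ∫ θ, (θ i - θs i) * (θ j - θs j) ∂Q = 0)
  (hvar : ∀ i, ∫ θ, (θ i - θs i) ^ 2 ∂Q ≤ η ^ 2)

include hmeanint hmomint hmean huncorr hvar in
lemma round_bound (x : Fin d → ℝ) (y : ℝ) (hx : ∀ i, |x i| ≤ 1) (hy : y = 1 ∨ y = -1) :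
    Integrable (fun θ => lloss θ x y) Q ∧
      ∫ θ, lloss θ x y ∂Q ≤ lloss θs x y + d * η ^ 2 / 8 := by
  have hy2 : y ^ 2 = 1 := by rcases hy with rfl | rfl <;> norm_num
  set c := Real.exp (y * dotp x θs) / (Real.exp (y * dotp x θs) + 1) - 1 with hc
  -- the upper bound function in its Taylor form
  have hLd : ∀ θ : Fin d → ℝ, (∑ i, x i * (θ i - θs i)) = dotp x θ - dotp x θs := by
    intro θ
    simp [dotp, mul_sub, Finset.sum_sub_distrib]
  have hint1 : ∀ i : Fin d, Integrable (fun θ => x i * (θ i - θs i)) Q := fun i => by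
    exact ((hmeanint i).sub (integrable_const _)).const_mul _
  have hLinInt : Integrable (fun θ => ∑ i, x i * (θ i - θs i)) Q := by
    exact integrable_finset_sum _ fun i _ => hint1 i
  have hint2 : ∀ i j : Fin d,
      Integrable (fun θ => x i * x j * ((θ i - θs i) * (θ j - θs j))) Q := fun i j => by
    exact (hmomint i j).const_mul _
  have hint2s : ∀ i : Fin d,
      Integrable (fun θ => ∑ j, x i * x j * ((θ i - θs i) * (θ j - θs j))) Q := fun i => by
    exact integrable_finset_sum _ fun j _ => hint2 i j
  have hLin2Int : Integrable
      (fun θ => ∑ i, ∑ j, x i * x j * ((θ i - θs i) * (θ j - θs j))) Q := by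
    exact integrable_finset_sum _ fun i _ => hint2s i
  have hsq : ∀ θ : Fin d → ℝ, (∑ i, x i * (θ i - θs i)) ^ 2
      = ∑ i, ∑ j, x i * x j * ((θ i - θs i) * (θ j - θs j)) := by
    intro θ
    rw [sq, Finset.sum_mul_sum]
    exact Finset.sum_congr rfl fun i _ => Finset.sum_congr rfl fun j _ => by ring
  have hRval : ∀ θ : Fin d → ℝ,
      lloss θs x y + c * (y * dotp x θ - y * dotp x θs)
          + (y * dotp x θ - y * dotp x θs) ^ 2 / 8
        = lloss θs x y + (c * y) * (∑ i, x i * (θ i - θs i))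
          + (∑ i, ∑ j, x i * x j * ((θ i - θs i) * (θ j - θs j))) / 8 := by
    intro θ
    have h0 : y * dotp x θ - y * dotp x θs = y * (∑ i, x i * (θ i - θs i)) := by
      rw [hLd θ]; ring
    rw [h0, ← hsq θ, mul_pow, hy2, one_mul]
    ring
  have hRInt : Integrable (fun θ => lloss θs x y + c * (y * dotp x θ - y * dotp x θs)
      + (y * dotp x θ - y * dotp x θs) ^ 2 / 8) Q := by
    have heq : (fun θ : Fin d → ℝ => lloss θs x y + c * (y * dotp x θ - y * dotp x θs)
        + (y * dotp x θ - y * dotp x θs) ^ 2 / 8)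
        = fun θ => lloss θs x y + (c * y) * (∑ i, x i * (θ i - θs i))
          + (∑ i, ∑ j, x i * x j * ((θ i - θs i) * (θ j - θs j))) / 8 := funext hRval
    rw [heq]
    exact ((integrable_const _).add (hLinInt.const_mul _)).add (hLin2Int.div_const _)
  have hptwise : ∀ θ : Fin d → ℝ, lloss θ x y ≤ lloss θs x y
      + c * (y * dotp x θ - y * dotp x θs) + (y * dotp x θ - y * dotp x θs) ^ 2 / 8 := by
    intro θ
    rw [lloss_eq_glog θ x y, lloss_eq_glog θs x y, hc]
    exact glog_taylor (y * dotp x θs) (y * dotp x θ)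
  have hllossInt : Integrable (fun θ => lloss θ x y) Q := by
    apply hRInt.mono (continuous_lloss x y).aestronglyMeasurable
    filter_upwards with θ
    rw [Real.norm_eq_abs, Real.norm_eq_abs, abs_of_nonneg (lloss_nonneg θ x y)]
    exact (hptwise θ).trans (le_abs_self _)
  have hLinZero : ∫ θ, ∑ i, x i * (θ i - θs i) ∂Q = 0 := by
    rw [integral_finset_sum _ fun i _ => hint1 i]
    apply Finset.sum_eq_zero
    intro i _
    rw [integral_const_mul, integral_sub (hmeanint i) (integrable_const _), hmean i]
    simp
  have hLin2Bound : ∫ θ, ∑ i, ∑ j, x i * x j * ((θ i - θs i) * (θ j - θs j)) ∂Q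
      ≤ d * η ^ 2 := by
    rw [integral_finset_sum _ fun i _ => hint2s i]
    have hineq : ∀ i : Fin d,
        (∫ θ, ∑ j, x i * x j * ((θ i - θs i) * (θ j - θs j)) ∂Q) ≤ η ^ 2 := by
      intro i
      rw [integral_finset_sum _ fun j _ => hint2 i j]
      have hterm : ∀ j : Fin d,
          (∫ θ, x i * x j * ((θ i - θs i) * (θ j - θs j)) ∂Q)
            = if j = i then x i * x i * ∫ θ, (θ i - θs i) ^ 2 ∂Q else 0 := by
        intro j
        rw [integral_const_mul]
        by_cases hij : j = i
        · subst hij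
          simp only [if_true]
          congr 1
          exact integral_congr_ae (ae_of_all _ fun θ => by ring)
        · rw [if_neg hij, huncorr i j (fun h => hij h.symm), mul_zero]
      rw [Finset.sum_congr rfl fun j _ => hterm j, Finset.sum_ite_eq' Finset.univ i _]
      simp only [Finset.mem_univ, if_true]
      have hxi : x i * x i ≤ 1 := by
        nlinarith [hx i, abs_nonneg (x i), neg_abs_le (x i), le_abs_self (x i)]
      have hv : 0 ≤ ∫ θ, (θ i - θs i) ^ 2 ∂Q := integral_nonneg fun θ => sq_nonneg _
      nlinarith [hvar i, sq_nonneg (x i)]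
    calc (∑ i, ∫ θ, ∑ j, x i * x j * ((θ i - θs i) * (θ j - θs j)) ∂Q)
        ≤ ∑ _i : Fin d, η ^ 2 := Finset.sum_le_sum fun i _ => hineq i
      _ = d * η ^ 2 := by simp [mul_comm]
  refine ⟨hllossInt, ?_⟩
  have hRint_eq : ∫ θ, (lloss θs x y + c * (y * dotp x θ - y * dotp x θs)
        + (y * dotp x θ - y * dotp x θs) ^ 2 / 8) ∂Q
      = lloss θs x y + (c * y) * (∫ θ, ∑ i, x i * (θ i - θs i) ∂Q)
        + (∫ θ, ∑ i, ∑ j, x i * x j * ((θ i - θs i) * (θ j - θs j)) ∂Q) / 8 := by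
    rw [integral_congr_ae (ae_of_all _ hRval)]
    rw [integral_add (by exact (integrable_const _).add (hLinInt.const_mul _))
      (by exact hLin2Int.div_const _),
      integral_add (integrable_const _) (by exact hLinInt.const_mul _),
      integral_const, integral_const_mul, integral_div]
    simp
  calc ∫ θ, lloss θ x y ∂Q
      ≤ ∫ θ, (lloss θs x y + c * (y * dotp x θ - y * dotp x θs)
          + (y * dotp x θ - y * dotp x θs) ^ 2 / 8) ∂Q :=
        integral_mono hllossInt hRInt hptwise
    _ ≤ lloss θs x y + d * η ^ 2 / 8 := by
        rw [hRint_eq, hLinZero, mul_zero, add_zero]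
        linarith [hLin2Bound]

end PartC

section Gibbs
open ENNReal

lemma gibbs_ineq {d : ℕ} (p₀ Q : Measure (Fin d → ℝ))
    [IsProbabilityMeasure p₀] [IsProbabilityMeasure Q]
    (hac : Q ≪ p₀) (hKL : Integrable (fun θ => Real.log (Q.rnDeriv p₀ θ).toReal) Q)
    (f : (Fin d → ℝ) → ℝ) (hfc : Continuous f) (hfpos : ∀ θ, 0 < f θ) (hfle : ∀ θ, f θ ≤ 1)
    (hlogint : Integrable (fun θ => Real.log (f θ)) Q) :
    -Real.log (∫ θ, f θ ∂p₀) ≤ (∫ θ, Real.log (Q.rnDeriv p₀ θ).toReal ∂Q)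
      + ∫ θ, -Real.log (f θ) ∂Q := by
  set g := Q.rnDeriv p₀ with hg
  have hgm : Measurable g := Measure.measurable_rnDeriv Q p₀
  set h : (Fin d → ℝ) → ℝ := fun θ => f θ / (g θ).toReal with hh
  have hfint : Integrable f p₀ := by
    apply Integrable.mono' (integrable_const (1 : ℝ)) hfc.aestronglyMeasurable
    filter_upwards with θ
    rw [Real.norm_eq_abs, abs_of_pos (hfpos θ)]
    exact hfle θ
  set cv := ∫ θ, f θ ∂p₀ with hcv
  have hcpos : 0 < cv := by
    rw [hcv, integral_pos_iff_support_of_nonneg (fun θ => (hfpos θ).le) hfint]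
    have : (Function.support f) = Set.univ := by
      ext θ; simp [(hfpos θ).ne']
    rw [this]; simp
  haveI : Q.HaveLebesgueDecomposition p₀ := Measure.haveLebesgueDecomposition_of_sigmaFinite Q p₀
  have hgpos : ∀ᵐ θ ∂Q, 0 < g θ := Measure.rnDeriv_pos hac
  have hglt : ∀ᵐ θ ∂Q, g θ < ∞ := hac.ae_le (Measure.rnDeriv_lt_top Q p₀)
  have hmeas_h : Measurable h := (hfc.measurable).div hgm.ennreal_toReal
  have hh_nonneg : ∀ θ, 0 ≤ h θ := fun θ => div_nonneg (hfpos θ).le ENNReal.toReal_nonneg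
  set Lf := ∫⁻ θ, ENNReal.ofReal (f θ) ∂p₀ with hLf
  have hLf_le_one : Lf ≤ 1 := by
    calc Lf ≤ ∫⁻ _, 1 ∂p₀ := lintegral_mono fun θ => by
          simpa using ENNReal.ofReal_le_one.mpr (hfle θ)
      _ = 1 := by simp
  have hLf_lt_top : Lf < ∞ := lt_of_le_of_lt hLf_le_one ENNReal.one_lt_top
  have hcv_eq : cv = Lf.toReal := by
    rw [hcv, integral_eq_lintegral_of_nonneg_ae (ae_of_all _ fun θ => (hfpos θ).le)
      hfc.aestronglyMeasurable]
  have hwd : p₀.withDensity g = Q := Measure.withDensity_rnDeriv_eq Q p₀ hac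
  have hlint : ∫⁻ θ, ENNReal.ofReal (h θ) ∂Q ≤ Lf := by
    rw [← hwd, lintegral_withDensity_eq_lintegral_mul p₀ hgm
      hmeas_h.ennreal_ofReal]
    apply lintegral_mono_ae
    filter_upwards [Measure.rnDeriv_lt_top Q p₀] with θ hlt
    show g θ * ENNReal.ofReal (h θ) ≤ ENNReal.ofReal (f θ)
    rcases eq_or_ne (g θ) 0 with h0 | h0
    · simp [h0]
    · have htr : 0 < (g θ).toReal := ENNReal.toReal_pos h0 hlt.ne
      have : g θ = ENNReal.ofReal ((g θ).toReal) := by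
        rw [ENNReal.ofReal_toReal hlt.ne]
      rw [this, ← ENNReal.ofReal_mul ENNReal.toReal_nonneg]
      apply le_of_eq
      congr 1
      rw [hh]
      field_simp
  have hInt_h : Integrable h Q := by
    refine ⟨hmeas_h.aestronglyMeasurable, ?_⟩
    rw [hasFiniteIntegral_iff_ofReal (ae_of_all _ hh_nonneg)]
    exact lt_of_le_of_lt hlint hLf_lt_top
  have hint_le : ∫ θ, h θ ∂Q ≤ cv := by
    rw [integral_eq_lintegral_of_nonneg_ae (ae_of_all _ hh_nonneg)
      hmeas_h.aestronglyMeasurable, hcv_eq]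
    exact ENNReal.toReal_mono hLf_lt_top.ne hlint
  have hh_pos : ∀ᵐ θ ∂Q, 0 < h θ := by
    filter_upwards [hgpos, hglt] with θ h1 h2
    exact div_pos (hfpos θ) (ENNReal.toReal_pos h1.ne' h2.ne)
  have hlog_eq : ∀ᵐ θ ∂Q, Real.log (h θ)
      = Real.log (f θ) - Real.log ((g θ).toReal) := by
    filter_upwards [hgpos, hglt] with θ h1 h2
    rw [hh]
    exact Real.log_div (hfpos θ).ne' (ENNReal.toReal_pos h1.ne' h2.ne).ne'
  have hlogh_int : Integrable (fun θ => Real.log (h θ)) Q :=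
    (hlogint.sub hKL).congr (by filter_upwards [hlog_eq] with θ hθ using hθ.symm)
  have hmain : ∫ θ, Real.log (h θ) ∂Q ≤ Real.log cv := by
    have hbound : ∀ᵐ θ ∂Q, Real.log (h θ) ≤ h θ / cv + (Real.log cv - 1) := by
      filter_upwards [hh_pos] with θ h1
      have := Real.log_le_sub_one_of_pos (div_pos h1 hcpos)
      rw [Real.log_div h1.ne' hcpos.ne'] at this
      linarith
    have hrhsint : Integrable (fun θ => h θ / cv + (Real.log cv - 1)) Q := by
      exact (hInt_h.div_const _).add (integrable_const _)
    calc ∫ θ, Real.log (h θ) ∂Q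
        ≤ ∫ θ, (h θ / cv + (Real.log cv - 1)) ∂Q := integral_mono_ae hlogh_int hrhsint hbound
      _ = (∫ θ, h θ ∂Q) / cv + (Real.log cv - 1) := by
          rw [integral_add (hInt_h.div_const _) (integrable_const _), integral_div,
            integral_const]
          simp
      _ ≤ Real.log cv := by
          have : (∫ θ, h θ ∂Q) / cv ≤ 1 := (div_le_one hcpos).mpr hint_le
          linarith
  have hsplit : ∫ θ, Real.log (h θ) ∂Q
      = (∫ θ, Real.log (f θ) ∂Q) - ∫ θ, Real.log ((g θ).toReal) ∂Q := by
    rw [integral_congr_ae hlog_eq, integral_sub hlogint hKL]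
  rw [hsplit] at hmain
  rw [integral_neg]
  linarith

end Gibbs


/-- variational regret bound for the Bayesian mixture algorithm
(Theorem `the:variational`): `Regret(A*,S_T,θ*) ≤ D(Q‖p₀) + dTη²/8`. -/
theorem stmt1 {d : ℕ} (p₀ Q : Measure (Fin d → ℝ))
    [IsProbabilityMeasure p₀] [IsProbabilityMeasure Q]
    (hac : Q ≪ p₀)
    (hKL : Integrable (fun θ => Real.log (Q.rnDeriv p₀ θ).toReal) Q)
    (θs : Fin d → ℝ) (η : ℝ) (hη : 0 ≤ η)
    (hmeanint : ∀ i, Integrable (fun θ => θ i) Q)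
    (hmomint : ∀ i j, Integrable (fun θ => (θ i - θs i) * (θ j - θs j)) Q)
    (hmean : ∀ i, ∫ θ, θ i ∂Q = θs i)
    (huncorr : ∀ i j, i ≠ j → ∫ θ, (θ i - θs i) * (θ j - θs j) ∂Q = 0)
    (hvar : ∀ i, ∫ θ, (θ i - θs i) ^ 2 ∂Q ≤ η ^ 2)
    {T : ℕ} (S : Fin T → (Fin d → ℝ) × ℝ) (hS : ValidSeq S) :
    regret (bayesAlg p₀) S θs ≤ KL Q p₀ + d * T * η ^ 2 / 8 := by
  have hmix := algLoss_bayes p₀ S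
  have hflog : ∀ θ, Real.log (histProb θ (List.ofFn S)) = -(seqLoss θ S) := by
    intro θ
    rw [histProb_ofFn_eq, Real.log_exp]
  have hround := fun t : Fin T =>
    round_bound Q θs η hmeanint hmomint hmean huncorr hvar (S t).1 (S t).2 (hS t).1 (hS t).2
  have hseqInt : Integrable (fun θ => seqLoss θ S) Q := by
    exact integrable_finset_sum _ fun t _ => (hround t).1
  have hlogint : Integrable (fun θ => Real.log (histProb θ (List.ofFn S))) Q := by
    apply hseqInt.neg.congr
    filter_upwards with θ using (hflog θ).symm
  have hgibbs := gibbs_ineq p₀ Q hac hKL (fun θ => histProb θ (List.ofFn S))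
    (continuous_histProb _) (fun θ => histProb_pos θ _) (fun θ => histProb_le_one θ _) hlogint
  have hseq_eq : ∫ θ, seqLoss θ S ∂Q = ∑ t, ∫ θ, lloss θ (S t).1 (S t).2 ∂Q :=
    integral_finset_sum _ fun t _ => (hround t).1
  have hseqbound : ∫ θ, seqLoss θ S ∂Q ≤ seqLoss θs S + T * (d * η ^ 2 / 8) := by
    rw [hseq_eq, seqLoss]
    calc (∑ t, ∫ θ, lloss θ (S t).1 (S t).2 ∂Q)
        ≤ ∑ t, (lloss θs (S t).1 (S t).2 + d * η ^ 2 / 8) :=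
          Finset.sum_le_sum fun t _ => (hround t).2
      _ = (∑ t, lloss θs (S t).1 (S t).2) + T * (d * η ^ 2 / 8) := by
          rw [Finset.sum_add_distrib, Finset.sum_const, Finset.card_univ, Fintype.card_fin,
            nsmul_eq_mul]
  have hneglog : ∫ θ, -Real.log (histProb θ (List.ofFn S)) ∂Q = ∫ θ, seqLoss θ S ∂Q :=
    integral_congr_ae (ae_of_all _ fun θ => by
      show -Real.log (histProb θ (List.ofFn S)) = seqLoss θ S
      rw [hflog θ, neg_neg])
  have hgibbs2 : -Real.log (∫ θ, histProb θ (List.ofFn S) ∂p₀)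
      ≤ (∫ θ, Real.log (Q.rnDeriv p₀ θ).toReal ∂Q)
        + ∫ θ, -Real.log (histProb θ (List.ofFn S)) ∂Q := hgibbs
  rw [hneglog] at hgibbs2
  have hfinal : -Real.log (mixProb p₀ (List.ofFn S))
      ≤ KL Q p₀ + (seqLoss θs S + T * (d * η ^ 2 / 8)) := by
    calc -Real.log (mixProb p₀ (List.ofFn S))
        ≤ (∫ θ, Real.log (Q.rnDeriv p₀ θ).toReal ∂Q) + ∫ θ, seqLoss θ S ∂Q := hgibbs2
      _ ≤ KL Q p₀ + (seqLoss θs S + T * (d * η ^ 2 / 8)) := by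
          rw [KL]
          linarith [hseqbound]
  rw [regret, hmix]
  have : (T : ℝ) * ((d : ℝ) * η ^ 2 / 8) = (d : ℝ) * T * η ^ 2 / 8 := by ring
  linarith [hfinal, this.le]
end

section
/- Let θ* ∈ ℝ^d, η ≥ 0, and let Q be a probability measure on ℝ^d with mean θ* (∫ θ_i dQ(θ) = θ*_i for each i), uncorrelated coordinates (∫ (θ_i − θ*_i)(θ_j − θ*_j) dQ(θ) = 0 for i ≠ j), and coordinate variances at most η² (∫ (θ_i − θ*_i)² dQ(θ) ≤ η² for each i). Then for every x ∈ ℝ^d with ‖x‖_∞ ≤ 1 and every y ∈ {−1,+1}, ∫ ℓ(θ,x,y) dQ(θ) − ℓ(θ*,x,y) ≤ dη²/8; consequently, for every sequence S_T with ‖x_t‖_∞ ≤ 1 for all t, ∫ L(θ,S_T) dQ(θ) − L(θ*,S_T) ≤ dTη²/8. -/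
open MeasureTheory Real Filter

noncomputable def sigf (t : ℝ) : ℝ := Real.exp t / (1 + Real.exp t)

lemma sigf_hasDeriv (t : ℝ) : HasDerivAt sigf (Real.exp t / (1 + Real.exp t)^2) t := by
  have h1 : (0:ℝ) < 1 + Real.exp t := by positivity
  have := (Real.hasDerivAt_exp t).div ((hasDerivAt_const t (1:ℝ)).add (Real.hasDerivAt_exp t)) (ne_of_gt h1)
  refine this.congr_deriv ?_
  simp only [Pi.add_apply]
  field_simp
  ring

lemma sigf_lip (a b : ℝ) : |sigf a - sigf b| ≤ |a - b| / 4 := by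
  have hd : ∀ t : ℝ, ‖deriv sigf t‖ ≤ 1/4 := by
    intro t
    rw [(sigf_hasDeriv t).deriv, Real.norm_eq_abs, abs_of_nonneg (by positivity)]
    rw [div_le_div_iff₀ (by positivity) (by norm_num)]
    nlinarith [sq_nonneg (1 - Real.exp t), Real.exp_pos t]
  have hdiff : Differentiable ℝ sigf := fun t => (sigf_hasDeriv t).differentiableAt
  have := (convex_univ : Convex ℝ (Set.univ : Set ℝ)).norm_image_sub_le_of_norm_deriv_le
    (fun t _ => hdiff t) (fun t _ => hd t) (Set.mem_univ b) (Set.mem_univ a)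
  simpa [Real.norm_eq_abs, div_eq_mul_inv, mul_comm] using this

lemma logistic_taylor (u v : ℝ) :
    Real.log (1 + Real.exp u) ≤ Real.log (1 + Real.exp v) + sigf v * (u - v) + (u - v)^2 / 8 := by
  set F : ℝ → ℝ := fun t => Real.log (1 + Real.exp (v + t)) - Real.log (1 + Real.exp v)
    - sigf v * t - t^2/8 with hF
  have hderiv : ∀ t : ℝ, HasDerivAt F (sigf (v + t) - sigf v - t/4) t := by
    intro t
    have h1 : HasDerivAt (fun t : ℝ => v + t) 1 t := (hasDerivAt_id t).const_add v
    have h2 : HasDerivAt (fun t : ℝ => Real.exp (v + t)) (Real.exp (v + t)) t := by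
      simpa [Function.comp_def] using (Real.hasDerivAt_exp (v + t)).comp t h1
    have h3 : HasDerivAt (fun t : ℝ => 1 + Real.exp (v + t)) (Real.exp (v + t)) t :=
      h2.const_add 1
    have h4 : HasDerivAt (fun t : ℝ => Real.log (1 + Real.exp (v + t))) (sigf (v + t)) t := by
      have := (Real.hasDerivAt_log (x := 1 + Real.exp (v + t)) (by positivity)).comp t h3
      simpa [sigf, div_eq_inv_mul, Function.comp_def] using this
    have h5 : HasDerivAt (fun t : ℝ => sigf v * t) (sigf v) t := by
      simpa using (hasDerivAt_id t).const_mul (sigf v)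
    have h6 : HasDerivAt (fun t : ℝ => t^2/8) (t/4) t := by
      have := (hasDerivAt_pow 2 t).div_const 8
      refine this.congr_deriv ?_
      push_cast
      ring
    exact (((h4.sub_const (Real.log (1 + Real.exp v))).sub h5).sub h6)
  have hdiff : Differentiable ℝ F := fun t => (hderiv t).differentiableAt
  have hcont : Continuous F := hdiff.continuous
  have hF0 : F 0 = 0 := by simp [hF]
  have key : F (u - v) ≤ 0 := by
    rcases le_or_gt 0 (u - v) with h | h
    · have hanti : AntitoneOn F (Set.Ici 0) := by
        apply antitoneOn_of_deriv_nonpos (convex_Ici 0) (hcont.continuousOn)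
          (fun t _ => (hdiff t).differentiableWithinAt)
        intro t ht
        rw [interior_Ici] at ht
        rw [(hderiv t).deriv]
        have := sigf_lip (v + t) v
        have ht' : (0:ℝ) < t := ht
        rw [show v + t - v = t by ring, abs_of_pos ht'] at this
        linarith [le_trans (le_abs_self (sigf (v+t) - sigf v)) this]
      have := hanti (Set.self_mem_Ici) (Set.mem_Ici.mpr h) h
      linarith [hF0 ▸ this]
    · have hmono : MonotoneOn F (Set.Iic 0) := by
        apply monotoneOn_of_deriv_nonneg (convex_Iic 0) (hcont.continuousOn)
          (fun t _ => (hdiff t).differentiableWithinAt)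
        intro t ht
        rw [interior_Iic] at ht
        rw [(hderiv t).deriv]
        have := sigf_lip (v + t) v
        have ht' : t < 0 := ht
        rw [show v + t - v = t by ring, abs_of_neg ht'] at this
        have h2 := (abs_le.mp this).1
        linarith
      have := hmono (Set.mem_Iic.mpr h.le) (Set.self_mem_Iic) h.le
      linarith [hF0 ▸ this]
  have : F (u - v) = Real.log (1 + Real.exp u) - Real.log (1 + Real.exp v)
      - sigf v * (u - v) - (u - v)^2/8 := by simp [hF]
  linarith [this ▸ key]

/-- second-order (Taylor) bound on the excess expected logistic loss of a
mean-`θ*` distribution `Q` with uncorrelated coordinates of variance at most `η²`: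
per example `∫ ℓ(θ,x,y) dQ − ℓ(θ*,x,y) ≤ dη²/8`, hence
`∫ L(θ,S_T) dQ − L(θ*,S_T) ≤ dTη²/8`. -/
theorem stmt3 {d : ℕ} (Q : Measure (Fin d → ℝ)) [IsProbabilityMeasure Q]
    (θs : Fin d → ℝ) (η : ℝ) (hη : 0 ≤ η)
    (hmeanint : ∀ i, Integrable (fun θ => θ i) Q)
    (hmomint : ∀ i j, Integrable (fun θ => (θ i - θs i) * (θ j - θs j)) Q)
    (hmean : ∀ i, ∫ θ, θ i ∂Q = θs i)
    (huncorr : ∀ i j, i ≠ j → ∫ θ, (θ i - θs i) * (θ j - θs j) ∂Q = 0)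
    (hvar : ∀ i, ∫ θ, (θ i - θs i) ^ 2 ∂Q ≤ η ^ 2) :
    (∀ x : Fin d → ℝ, (∀ i, |x i| ≤ 1) → ∀ y : ℝ, y = 1 ∨ y = -1 →
      (∫ θ, lloss θ x y ∂Q) - lloss θs x y ≤ d * η ^ 2 / 8) ∧
    (∀ T : ℕ, ∀ S : Fin T → (Fin d → ℝ) × ℝ, ValidSeq S →
      (∫ θ, seqLoss θ S ∂Q) - seqLoss θs S ≤ d * T * η ^ 2 / 8) := by
  have key : ∀ x : Fin d → ℝ, (∀ i, |x i| ≤ 1) → ∀ y : ℝ, y = 1 ∨ y = -1 →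
      Integrable (fun θ => lloss θ x y) Q ∧
      (∫ θ, lloss θ x y ∂Q) - lloss θs x y ≤ d * η ^ 2 / 8 := by
    intro x hx y hy
    set Sf : (Fin d → ℝ) → ℝ := fun θ => ∑ i, x i * (θ i - θs i) with hSf
    have hδint : ∀ i : Fin d, Integrable (fun θ => θ i - θs i) Q :=
      fun i => (hmeanint i).sub (integrable_const _)
    have hSint : Integrable Sf Q :=
      integrable_finset_sum _ (fun i _ => (hδint i).const_mul _)
    have hS2eq : ∀ θ : Fin d → ℝ,
        Sf θ ^ 2 = ∑ i, ∑ j, (x i * x j) * ((θ i - θs i) * (θ j - θs j)) := by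
      intro θ
      rw [hSf, sq, Finset.sum_mul_sum]
      exact Finset.sum_congr rfl fun i _ => Finset.sum_congr rfl fun j _ => by ring
    have hS2int : Integrable (fun θ => Sf θ ^ 2) Q := by
      simp only [hS2eq]
      exact integrable_finset_sum _ fun i _ =>
        integrable_finset_sum _ fun j _ => (hmomint i j).const_mul _
    have hSmean : ∫ θ, Sf θ ∂Q = 0 := by
      rw [hSf, integral_finset_sum _ (fun i _ => (hδint i).const_mul _)]
      refine Finset.sum_eq_zero fun i _ => ?_
      rw [integral_const_mul, integral_sub (hmeanint i) (integrable_const _), hmean i,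
        integral_const]
      simp
    have hS2mean : ∫ θ, Sf θ ^ 2 ∂Q ≤ d * η ^ 2 := by
      simp only [hS2eq]
      rw [integral_finset_sum _ (fun i _ =>
        integrable_finset_sum _ fun j _ => (hmomint i j).const_mul _)]
      have step : ∀ i : Fin d,
          (∫ θ, ∑ j, (x i * x j) * ((θ i - θs i) * (θ j - θs j)) ∂Q) ≤ η ^ 2 := by
        intro i
        rw [integral_finset_sum _ (fun j _ => (hmomint i j).const_mul _)]
        have : ∀ j : Fin d, (∫ θ, (x i * x j) * ((θ i - θs i) * (θ j - θs j)) ∂Q)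
            = (x i * x j) * ∫ θ, (θ i - θs i) * (θ j - θs j) ∂Q :=
          fun j => integral_const_mul _ _
        simp only [this]
        rw [Finset.sum_eq_single i]
        · have h1 : ∫ θ, (θ i - θs i) * (θ i - θs i) ∂Q ≤ η ^ 2 := by
            have := hvar i
            simpa [sq] using this
          have h2 : x i * x i ≤ 1 := by
            have := hx i
            nlinarith [abs_nonneg (x i), sq_abs (x i), sq_nonneg (x i)]
          have h3 : (0:ℝ) ≤ ∫ θ, (θ i - θs i) * (θ i - θs i) ∂Q := by
            apply integral_nonneg
            intro θ; exact mul_self_nonneg _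
          nlinarith [sq_nonneg (x i), mul_self_nonneg (x i)]
        · intro j _ hj
          rw [huncorr i j (Ne.symm hj), mul_zero]
        · intro h; exact absurd (Finset.mem_univ i) h
      calc (∑ i, ∫ θ, ∑ j, (x i * x j) * ((θ i - θs i) * (θ j - θs j)) ∂Q)
          ≤ ∑ _i : Fin d, η ^ 2 := Finset.sum_le_sum fun i _ => step i
        _ = d * η ^ 2 := by simp [mul_comm]
    -- pointwise bound
    set v : ℝ := -(y * dotp x θs) with hv
    set B : (Fin d → ℝ) → ℝ :=
      fun θ => lloss θs x y + (sigf v * (-y)) * Sf θ + Sf θ ^ 2 / 8 with hB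
    have hy2 : y ^ 2 = 1 := by rcases hy with h | h <;> simp [h]
    have hdiffS : ∀ θ : Fin d → ℝ, dotp x θ - dotp x θs = Sf θ := by
      intro θ
      rw [hSf, dotp, dotp, ← Finset.sum_sub_distrib]
      exact Finset.sum_congr rfl fun i _ => by ring
    have hpt : ∀ θ : Fin d → ℝ, lloss θ x y ≤ B θ := by
      intro θ
      have := logistic_taylor (-(y * dotp x θ)) v
      have huv : -(y * dotp x θ) - v = (-y) * Sf θ := by
        rw [hv, ← hdiffS θ]; ring
      rw [huv] at this
      have hsq : ((-y) * Sf θ)^2 = Sf θ ^ 2 := by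
        rw [mul_pow]; nlinarith [hy2]
      rw [hsq] at this
      unfold B
      unfold lloss
      rw [← hv]
      linarith [this]
    have hBint : Integrable B Q := by
      apply Integrable.add
      apply Integrable.add (integrable_const _) (hSint.const_mul _)
      exact hS2int.div_const 8
    have hmeas : AEStronglyMeasurable (fun θ => lloss θ x y) Q := by
      apply Continuous.aestronglyMeasurable
      apply Continuous.log
      · apply Continuous.add continuous_const
        apply Real.continuous_exp.comp
        apply Continuous.neg
        apply Continuous.mul continuous_const
        unfold dotp
        exact continuous_finset_sum _ fun i _ =>
          (continuous_const.mul (continuous_apply i))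
      · intro θ; positivity
    have hnonneg : ∀ θ : Fin d → ℝ, 0 ≤ lloss θ x y := by
      intro θ
      apply Real.log_nonneg
      have := Real.exp_pos (-(y * dotp x θ))
      unfold lloss at *
      linarith [Real.exp_pos (-(y * dotp x θ))]
    have hllint : Integrable (fun θ => lloss θ x y) Q := by
      apply Integrable.mono' hBint hmeas
      filter_upwards with θ
      rw [Real.norm_eq_abs, abs_of_nonneg (hnonneg θ)]
      exact hpt θ
    refine ⟨hllint, ?_⟩
    have h1 : ∫ θ, lloss θ x y ∂Q ≤ ∫ θ, B θ ∂Q := integral_mono hllint hBint hpt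
    have h2 : ∫ θ, B θ ∂Q = lloss θs x y + (∫ θ, Sf θ ^ 2 ∂Q) / 8 := by
      have hBeq : ∀ θ : Fin d → ℝ,
          B θ = lloss θs x y + (sigf v * -y) * Sf θ + Sf θ ^ 2 / 8 := fun θ => rfl
      simp only [hBeq]
      have hf1 : Integrable (fun θ : Fin d → ℝ => lloss θs x y + sigf v * -y * Sf θ) Q :=
        (integrable_const _).add (hSint.const_mul _)
      have hf0 : Integrable (fun _ : Fin d → ℝ => lloss θs x y) Q := integrable_const _
      have hf2 : Integrable (fun θ : Fin d → ℝ => sigf v * -y * Sf θ) Q := hSint.const_mul _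
      have hf3 : Integrable (fun θ : Fin d → ℝ => Sf θ ^ 2 / 8) Q := hS2int.div_const 8
      rw [integral_add hf1 hf3, integral_add hf0 hf2,
        integral_const_mul, hSmean, integral_div, integral_const]
      simp
    rw [h2] at h1
    linarith [hS2mean]
  constructor
  · exact fun x hx y hy => (key x hx y hy).2
  · intro T S hS
    have hint : ∀ t : Fin T, Integrable (fun θ => lloss θ (S t).1 (S t).2) Q :=
      fun t => (key (S t).1 (hS t).1 (S t).2 (hS t).2).1
    have : ∫ θ, seqLoss θ S ∂Q = ∑ t, ∫ θ, lloss θ (S t).1 (S t).2 ∂Q := by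
      unfold seqLoss
      exact integral_finset_sum _ fun t _ => hint t
    rw [this]
    unfold seqLoss
    rw [← Finset.sum_sub_distrib]
    calc (∑ t, ((∫ θ, lloss θ (S t).1 (S t).2 ∂Q) - lloss θs (S t).1 (S t).2))
        ≤ ∑ _t : Fin T, d * η ^ 2 / 8 :=
          Finset.sum_le_sum fun t _ => (key (S t).1 (hS t).1 (S t).2 (hS t).2).2
      _ = d * T * η ^ 2 / 8 := by
          simp [Finset.sum_const]
          ring
end

section
/- (Counting lattice points in an ℓ₁ ball.) For every ε > 0, B > 0 and dimension d ∈ ℕ, the set {θ ∈ ℝ^d : θ_i ∈ εℤ for every i, and ‖θ‖₁ ≤ B} is finite and its cardinality is at most Σ_{n=0}^{d} C(d,n)·2^n·(B/ε)^n/n!, where C(d,n) is the binomial coefficient and ‖θ‖₁ = Σ_{i=1}^d |θ_i|. -/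
open MeasureTheory Real Filter

namespace Stmt16Aux

variable {d : ℕ}

def supp (k : Fin d → ℤ) : Finset (Fin d) := Finset.univ.filter (fun i => k i ≠ 0)

def psum (k : Fin d → ℤ) (i : Fin d) : ℕ :=
  ∑ j ∈ (supp k).filter (· ≤ i), (k j).natAbs

lemma one_le_natAbs {k : Fin d → ℤ} {i : Fin d} (hi : i ∈ supp k) : 1 ≤ (k i).natAbs := by
  simp only [supp, Finset.mem_filter] at hi
  omega

lemma filter_le_eq_insert {k : Fin d → ℤ} {i : Fin d} (hi : i ∈ supp k) :
    (supp k).filter (· ≤ i) = insert i ((supp k).filter (· < i)) := by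
  ext j
  simp only [Finset.mem_filter, Finset.mem_insert]
  constructor
  · rintro ⟨hj, hle⟩
    rcases eq_or_lt_of_le hle with h | h
    · exact Or.inl h
    · exact Or.inr ⟨hj, h⟩
  · rintro (rfl | ⟨hj, hlt⟩)
    · exact ⟨hi, le_refl _⟩
    · exact ⟨hj, le_of_lt hlt⟩

lemma psum_eq {k : Fin d → ℤ} {i : Fin d} (hi : i ∈ supp k) :
    psum k i = (k i).natAbs + ∑ j ∈ (supp k).filter (· < i), (k j).natAbs := by
  rw [psum, filter_le_eq_insert hi, Finset.sum_insert (by simp)]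

lemma one_le_psum {k : Fin d → ℤ} {i : Fin d} (hi : i ∈ supp k) : 1 ≤ psum k i := by
  have := one_le_natAbs hi
  rw [psum_eq hi]; omega

lemma psum_le (k : Fin d → ℤ) (i : Fin d) : psum k i ≤ ∑ j, (k j).natAbs := by
  apply Finset.sum_le_sum_of_subset
  intro j _; exact Finset.mem_univ j

lemma psum_strictMonoOn {k : Fin d → ℤ} {i i' : Fin d} (hi' : i' ∈ supp k)
    (h : i < i') : psum k i < psum k i' := by
  have h1 : (supp k).filter (· ≤ i) ⊆ ((supp k).filter (· ≤ i')).erase i' := by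
    intro j hj
    simp only [Finset.mem_filter] at hj
    refine Finset.mem_erase.2 ⟨?_, Finset.mem_filter.2 ⟨hj.1, le_of_lt (lt_of_le_of_lt hj.2 h)⟩⟩
    exact ne_of_lt (lt_of_le_of_lt hj.2 h)
  have h2 : psum k i ≤ ∑ j ∈ ((supp k).filter (· ≤ i')).erase i', (k j).natAbs :=
    Finset.sum_le_sum_of_subset h1
  have h3 : (∑ j ∈ ((supp k).filter (· ≤ i')).erase i', (k j).natAbs) + (k i').natAbs
      = psum k i' := by
    rw [psum]
    exact Finset.sum_erase_add _ _ (Finset.mem_filter.2 ⟨hi', le_refl _⟩)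
  have := one_le_natAbs hi'
  omega

lemma card_image_psum (k : Fin d → ℤ) :
    ((supp k).image (psum k)).card = (supp k).card := by
  rw [Finset.card_image_of_injOn]
  intro a ha b hb hab
  by_contra hne
  rcases lt_or_gt_of_ne hne with h | h
  · exact absurd hab (ne_of_lt (psum_strictMonoOn hb h))
  · exact absurd hab.symm (ne_of_lt (psum_strictMonoOn ha h))

/-- Key injectivity: support, sign set and partial-sum set determine the vector. -/
lemma key_inj {k k' : Fin d → ℤ} (hs : supp k = supp k')
    (hneg : (supp k).filter (fun i => k i < 0) = (supp k').filter (fun i => k' i < 0))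
    (hp : (supp k).image (psum k) = (supp k').image (psum k')) : k = k' := by
  classical
  set s := supp k with hsdef
  set n := s.card with hn
  have hmem : ∀ x : Fin n, psum k (s.orderEmbOfFin rfl x) ∈ (supp k).image (psum k) := by
    intro x
    exact Finset.mem_image_of_mem _ (Finset.orderEmbOfFin_mem s rfl x)
  have hmem' : ∀ x : Fin n, psum k' (s.orderEmbOfFin rfl x) ∈ (supp k).image (psum k) := by
    intro x
    rw [hp]
    exact Finset.mem_image_of_mem _ (by rw [← hs]; exact Finset.orderEmbOfFin_mem s rfl x)
  have hmono : StrictMono (fun x : Fin n => psum k (s.orderEmbOfFin rfl x)) := by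
    intro a b hab
    exact psum_strictMonoOn (Finset.orderEmbOfFin_mem s rfl b)
      ((s.orderEmbOfFin rfl).strictMono hab)
  have hmono' : StrictMono (fun x : Fin n => psum k' (s.orderEmbOfFin rfl x)) := by
    intro a b hab
    refine psum_strictMonoOn ?_ ((s.orderEmbOfFin rfl).strictMono hab)
    rw [← hs]; exact Finset.orderEmbOfFin_mem s rfl b
  have hcard : ((supp k).image (psum k)).card = n := card_image_psum k
  have he1 := Finset.orderEmbOfFin_unique hcard hmem hmono
  have he2 := Finset.orderEmbOfFin_unique hcard hmem' hmono'
  have hps : ∀ i ∈ s, psum k i = psum k' i := by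
    intro i hi
    have : i ∈ Set.range (s.orderEmbOfFin rfl) := by
      rw [Finset.range_orderEmbOfFin]; exact hi
    rcases this with ⟨x, rfl⟩
    exact congrFun (he1.trans he2.symm) x
  have main : ∀ m : ℕ, ∀ i : Fin d, i.val = m → k i = k' i := by
    intro m
    induction m using Nat.strong_induction_on with
    | _ m ih =>
      intro i him
      by_cases hi : i ∈ s
      · have hi' : i ∈ supp k' := by rwa [← hs]
        have hq : ∑ j ∈ (supp k).filter (· < i), (k j).natAbs
            = ∑ j ∈ (supp k').filter (· < i), (k' j).natAbs := by
          rw [← hs]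
          apply Finset.sum_congr rfl
          intro j hj
          have hjlt : j < i := (Finset.mem_filter.1 hj).2
          rw [ih j.val (him ▸ hjlt) j rfl]
        have h1 := psum_eq hi
        have h2 := psum_eq hi'
        have h3 := hps i hi
        have habs : (k i).natAbs = (k' i).natAbs := by omega
        have hsgn : k i < 0 ↔ k' i < 0 := by
          constructor
          · intro h
            have : i ∈ (supp k').filter (fun i => k' i < 0) := by
              rw [← hneg]; exact Finset.mem_filter.2 ⟨hi, h⟩
            exact (Finset.mem_filter.1 this).2
          · intro h
            have : i ∈ (supp k).filter (fun i => k i < 0) := by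
              rw [hneg]; exact Finset.mem_filter.2 ⟨hi', h⟩
            exact (Finset.mem_filter.1 this).2
        omega
      · have h1 : k i = 0 := by
          by_contra h
          exact hi (Finset.mem_filter.2 ⟨Finset.mem_univ i, h⟩)
        have h2 : k' i = 0 := by
          by_contra h
          have : i ∈ supp k' := Finset.mem_filter.2 ⟨Finset.mem_univ i, h⟩
          rw [← hs] at this
          exact hi this
        rw [h1, h2]
  funext i
  exact main i.val i rfl

end Stmt16Aux

open Stmt16Aux

/-- counting lattice points in an `ℓ₁` ball: the set of points of the
lattice `εℤ^d` of `ℓ₁`-norm at most `B` is finite, of cardinality at most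
`∑_{n=0}^d C(d,n)·2^n·(B/ε)^n/n!`. -/
theorem stmt16 (ε B : ℝ) (hε : 0 < ε) (hB : 0 < B) (d : ℕ) :
    {θ : Fin d → ℝ | (∀ i, ∃ k : ℤ, θ i = ε * k) ∧ (∑ i, |θ i|) ≤ B}.Finite ∧
      (Nat.card {θ : Fin d → ℝ | (∀ i, ∃ k : ℤ, θ i = ε * k) ∧ (∑ i, |θ i|) ≤ B} : ℝ) ≤
        ∑ n ∈ Finset.range (d + 1),
          (d.choose n : ℝ) * 2 ^ n * (B / ε) ^ n / (n.factorial : ℝ) := by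
  classical
  set N := ⌊B / ε⌋₊ with hNdef
  set S := {θ : Fin d → ℝ | (∀ i, ∃ k : ℤ, θ i = ε * k) ∧ (∑ i, |θ i|) ≤ B} with hSdef
  set K : (Fin d → ℝ) → (Fin d → ℤ) := fun θ i => ⌊θ i / ε⌋ with hKdef
  have hK : ∀ θ ∈ S, ∀ i, θ i = ε * K θ i := by
    intro θ hθ i
    obtain ⟨m, hm⟩ := hθ.1 i
    have : K θ i = m := by
      simp only [hKdef, hm, mul_div_cancel_left₀ _ (ne_of_gt hε), Int.floor_intCast]
    rw [this, ← hm]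
  have habs : ∀ θ ∈ S, ∀ i, |θ i| = ε * ((K θ i).natAbs : ℝ) := by
    intro θ hθ i
    rw [hK θ hθ i, abs_mul, abs_of_pos hε, Nat.cast_natAbs, Int.cast_abs]
  have hsum : ∀ θ ∈ S, ∑ i, (K θ i).natAbs ≤ N := by
    intro θ hθ
    apply Nat.le_floor
    rw [le_div_iff₀ hε, mul_comm]
    push_cast
    calc ε * ∑ i, ((K θ i).natAbs : ℝ) = ∑ i, ε * ((K θ i).natAbs : ℝ) := by
          rw [Finset.mul_sum]
      _ = ∑ i, |θ i| := by
          apply Finset.sum_congr rfl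
          intro i _
          rw [habs θ hθ i]
      _ ≤ B := hθ.2
  set Φ : (Fin d → ℝ) → Σ _ : Finset (Fin d), Finset (Fin d) × Finset ℕ := fun θ =>
    ⟨supp (K θ), ((supp (K θ)).filter (fun i => K θ i < 0), (supp (K θ)).image (psum (K θ)))⟩
    with hΦdef
  set A : Finset (Σ _ : Finset (Fin d), Finset (Fin d) × Finset ℕ) :=
    (Finset.univ : Finset (Fin d)).powerset.sigma
      (fun s => s.powerset ×ˢ (Finset.Icc 1 N).powersetCard s.card) with hAdef
  have hmemA : ∀ θ ∈ S, Φ θ ∈ A := by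
    intro θ hθ
    refine Finset.mem_sigma.2 ⟨Finset.mem_powerset.2 (Finset.subset_univ _), ?_⟩
    refine Finset.mem_product.2 ⟨Finset.mem_powerset.2 (Finset.filter_subset _ _), ?_⟩
    refine Finset.mem_powersetCard.2 ⟨?_, card_image_psum _⟩
    intro x hx
    obtain ⟨i, hi, rfl⟩ := Finset.mem_image.1 hx
    refine Finset.mem_Icc.2 ⟨one_le_psum hi, ?_⟩
    exact le_trans (psum_le _ _) (hsum θ hθ)
  have hinj : Set.InjOn Φ S := by
    intro θ hθ θ' hθ' heq
    have h1 : supp (K θ) = supp (K θ') := congrArg Sigma.fst heq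
    have h2 : ((supp (K θ)).filter (fun i => K θ i < 0), (supp (K θ)).image (psum (K θ)))
        = ((supp (K θ')).filter (fun i => K θ' i < 0), (supp (K θ')).image (psum (K θ'))) := by
      have := congrArg Sigma.snd heq
      exact this
    have hk := key_inj h1 (congrArg Prod.fst h2) (congrArg Prod.snd h2)
    funext i
    rw [hK θ hθ i, hK θ' hθ' i, hk]
  have himg : Φ '' S ⊆ ↑A := by
    rintro _ ⟨θ, hθ, rfl⟩
    exact hmemA θ hθ
  have hfin : S.Finite :=
    Set.Finite.of_finite_image (A.finite_toSet.subset himg) hinj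
  refine ⟨hfin, ?_⟩
  have hcard : Nat.card S ≤ A.card := by
    rw [Nat.card_coe_set_eq]
    calc S.ncard = (Φ '' S).ncard := (Set.ncard_image_of_injOn hinj).symm
      _ ≤ (↑A : Set _).ncard := Set.ncard_le_ncard himg A.finite_toSet
      _ = A.card := Set.ncard_coe_finset A
  have hA : A.card = ∑ n ∈ Finset.range (d + 1), d.choose n * (2 ^ n * N.choose n) := by
    rw [hAdef, Finset.card_sigma]
    have h1 : ∀ s ∈ (Finset.univ : Finset (Fin d)).powerset,
        (s.powerset ×ˢ (Finset.Icc 1 N).powersetCard s.card).card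
          = 2 ^ s.card * N.choose s.card := by
      intro s _
      rw [Finset.card_product, Finset.card_powerset, Finset.card_powersetCard, Nat.card_Icc]
      simp
    rw [Finset.sum_congr rfl h1, Finset.sum_powerset]
    rw [Finset.card_univ, Fintype.card_fin]
    apply Finset.sum_congr rfl
    intro n _
    have h2 : ∀ t ∈ Finset.powersetCard n (Finset.univ : Finset (Fin d)),
        2 ^ t.card * N.choose t.card = 2 ^ n * N.choose n := by
      intro t ht
      rw [(Finset.mem_powersetCard.1 ht).2]
    rw [Finset.sum_congr rfl h2, Finset.sum_const, Finset.card_powersetCard,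
      Finset.card_univ, Fintype.card_fin, smul_eq_mul]
  calc (Nat.card ↑S : ℝ) ≤ (A.card : ℝ) := by exact_mod_cast hcard
    _ = ∑ n ∈ Finset.range (d + 1), (d.choose n : ℝ) * (2 ^ n * (N.choose n : ℝ)) := by
        rw [hA]; push_cast; ring
    _ ≤ ∑ n ∈ Finset.range (d + 1),
          (d.choose n : ℝ) * 2 ^ n * (B / ε) ^ n / (n.factorial : ℝ) := by
        apply Finset.sum_le_sum
        intro n _
        have h1 : (N.choose n : ℝ) ≤ (N : ℝ) ^ n / (n.factorial : ℝ) :=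
          Nat.choose_le_pow_div n N
        have h2 : (N : ℝ) ≤ B / ε := Nat.floor_le (by positivity)
        have h3 : (N : ℝ) ^ n ≤ (B / ε) ^ n :=
          pow_le_pow_left₀ (by positivity) h2 n
        have h4 : (N.choose n : ℝ) ≤ (B / ε) ^ n / (n.factorial : ℝ) := by
          refine h1.trans ?_
          gcongr
        calc (d.choose n : ℝ) * (2 ^ n * (N.choose n : ℝ))
            ≤ (d.choose n : ℝ) * (2 ^ n * ((B / ε) ^ n / (n.factorial : ℝ))) := by
              apply mul_le_mul_of_nonneg_left _ (by positivity)
              exact mul_le_mul_of_nonneg_left h4 (by positivity)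
          _ = (d.choose n : ℝ) * 2 ^ n * (B / ε) ^ n / (n.factorial : ℝ) := by ring
end
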